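/- Let M be a tame sequence (normalized, log-convex, of moderate growth: M_{j+k} ≤ A^{j+k} M_j M_k for some A > 0). Then there exists a constant B > 0 such that h_M(t) ≤ (h_M(B t))^2 for all t ≥ 0, where h_M(t) = inf_j t^j M_j. -/
import Mathlib


/-- For a tame sequence `M` (normalized, log-convex, of moderate growth), there is a
constant `B > 0` with `h_M t ≤ (h_M (B * t))^2` for all `t ≥ 0`. -/
theorem stmt_2 (M : ℕ → ℝ) (hpos : ∀ j, 0 < M j) (h0 : M 0 = 1)
    (hmono : Monotone M) (hratio : Monotone fun j => M (j + 1) / M j)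
    (hmod : ∃ A : ℝ, 0 < A ∧ ∀ j k : ℕ, M (j + k) ≤ A ^ (j + k) * M j * M k)
    (hM : ℝ → ℝ) (hhM : ∀ t : ℝ, 0 ≤ t → hM t = sInf {y : ℝ | ∃ j : ℕ, y = t ^ j * M j}) :
    ∃ B : ℝ, 0 < B ∧ ∀ t : ℝ, 0 ≤ t → hM t ≤ (hM (B * t)) ^ 2 := by
  obtain ⟨A, hA, hmodA⟩ := hmod
  refine ⟨A, hA, fun t ht => ?_⟩
  have hAt : 0 ≤ A * t := mul_nonneg hA.le ht
  rw [hhM t ht, hhM (A * t) hAt]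
  set S : ℝ → Set ℝ := fun s => {y : ℝ | ∃ j : ℕ, y = s ^ j * M j} with hS
  have hne : ∀ s : ℝ, (S s).Nonempty := fun s => ⟨s ^ 0 * M 0, 0, rfl⟩
  have hbdd : ∀ s : ℝ, 0 ≤ s → ∀ y ∈ S s, (0:ℝ) ≤ y := by
    rintro s hs y ⟨j, rfl⟩
    exact mul_nonneg (pow_nonneg hs j) (hpos j).le
  have hbb : ∀ s : ℝ, 0 ≤ s → BddBelow (S s) := fun s hs => ⟨0, fun y hy => hbdd s hs y hy⟩
  have key : ∀ x ∈ S (A * t), ∀ y ∈ S (A * t), sInf (S t) ≤ x * y := by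
    rintro _ ⟨j, rfl⟩ _ ⟨k, rfl⟩
    have h1 : sInf (S t) ≤ t ^ (j + k) * M (j + k) := csInf_le (hbb t ht) ⟨j + k, rfl⟩
    refine h1.trans ?_
    calc t ^ (j + k) * M (j + k)
        ≤ t ^ (j + k) * (A ^ (j + k) * M j * M k) :=
          mul_le_mul_of_nonneg_left (hmodA j k) (pow_nonneg ht _)
      _ = (A * t) ^ j * M j * ((A * t) ^ k * M k) := by ring
  have hc0 : (0:ℝ) ≤ sInf (S (A * t)) := le_csInf (hne _) (hbdd _ hAt)
  refine le_of_forall_gt_imp_ge_of_dense fun b hb => ?_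
  have hb0 : (0:ℝ) ≤ b := le_trans (sq_nonneg _) hb.le
  have hlt : sInf (S (A * t)) < Real.sqrt b := by
    rw [show sInf (S (A * t)) = Real.sqrt ((sInf (S (A * t))) ^ 2) from (Real.sqrt_sq hc0).symm]
    exact Real.sqrt_lt_sqrt (sq_nonneg _) hb
  obtain ⟨x, hx, hxlt⟩ := exists_lt_of_csInf_lt (hne _) hlt
  have hx0 : (0:ℝ) ≤ x := hbdd _ hAt x hx
  calc sInf (S t) ≤ x * x := key x hx x hx
    _ ≤ Real.sqrt b * Real.sqrt b := mul_le_mul hxlt.le hxlt.le hx0 (Real.sqrt_nonneg _)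
    _ = b := Real.mul_self_sqrt hb0
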